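/- Let M be a topological space, E a real topological vector space, and ψ : M → E a continuous map admitting a local cone structure C. Suppose every fiber of ψ is preconnected, and suppose that for every u in the range of ψ and every neighborhood W of u in E there is a neighborhood B ⊆ W of u in E such that ψ⁻¹(B) is preconnected. Then the corestriction ψ : M → range ψ is an open map (where range ψ carries the subspace topology). -/

import Mathlib

open Topology

/-- A local cone structure for a continuous map `ψ : M → E`: an assignment of a
closed subset `C x ⊆ E` to each `x ∈ M` such that (S1) every neighborhood of `x`
contains an open neighborhood `U` of `x` with `ψ '' U ⊆ C x` and `ψ '' U` a
neighborhood of `ψ x` in `C x` (subspace topology), and (S2) `C` is constant on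
connected components of fibers of `ψ`. -/
structure IsLocalConeStructure {M E : Type*} [TopologicalSpace M] [TopologicalSpace E]
    (ψ : M → E) (C : M → Set E) : Prop where
  isClosed : ∀ x : M, IsClosed (C x)
  locally : ∀ x : M, ∀ V ∈ 𝓝 x, ∃ U : Set M, IsOpen U ∧ x ∈ U ∧ U ⊆ V ∧
      ψ '' U ⊆ C x ∧ ψ '' U ∈ 𝓝[C x] (ψ x)
  fiberCompat : ∀ x y : M, y ∈ connectedComponentIn (ψ ⁻¹' {ψ x}) x → C x = C y

/-- If `ψ : M → E` is continuous, admits a local cone structure, has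
preconnected fibers, and every point of the range has arbitrarily small neighborhoods
with preconnected preimage, then the corestriction `ψ : M → range ψ` is open. -/
theorem stmt11 {M E : Type*} [TopologicalSpace M]
    [AddCommGroup E] [Module ℝ E] [TopologicalSpace E]
    [IsTopologicalAddGroup E] [ContinuousSMul ℝ E]
    (ψ : M → E) (C : M → Set E)
    (hcont : Continuous ψ) (hC : IsLocalConeStructure ψ C)
    (hfib : ∀ u : E, IsPreconnected (ψ ⁻¹' {u}))
    (hsmall : ∀ u ∈ Set.range ψ, ∀ W ∈ 𝓝 u,
      ∃ B ∈ 𝓝 u, B ⊆ W ∧ IsPreconnected (ψ ⁻¹' B)) :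
    IsOpenMap (Set.rangeFactorization ψ) := by
  -- `C` is constant on fibers of `ψ`.
  have hconst : ∀ y y' : M, ψ y = ψ y' → C y = C y' := by
    intro y y' h
    apply hC.fiberCompat
    rw [(hfib (ψ y)).connectedComponentIn (show y ∈ ψ ⁻¹' {ψ y} from rfl)]
    exact h.symm
  intro U hU
  rw [isOpen_iff_mem_nhds]
  rintro ⟨u, hu⟩ hz
  obtain ⟨x, hxU, hx⟩ := hz
  obtain rfl : u = ψ x := (congrArg Subtype.val hx).symm
  clear hx
  -- Apply (S1) at `x` inside `U`.
  obtain ⟨U', hU'o, hxU', hU'U, hU'C, hU'nhds⟩ := hC.locally x U (hU.mem_nhds hxU)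
  -- Get an open `W ∋ ψ x` with `W ∩ C x ⊆ ψ '' U'`.
  obtain ⟨W, hWo, hxW, hWsub⟩ := mem_nhdsWithin.mp hU'nhds
  -- Shrink to `B ⊆ W` with preconnected preimage.
  obtain ⟨B, hB, hBW, hBpc⟩ := hsmall (ψ x) ⟨x, rfl⟩ W (hWo.mem_nhds hxW)
  -- Key step: every point of `ψ ⁻¹' B` maps into `C x`.
  have key : ∀ y ∈ ψ ⁻¹' B, ψ y ∈ C x → ∃ N : Set M, IsOpen N ∧ y ∈ N ∧ ψ '' N ⊆ C x := by
    intro y hyB hyC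
    have hyW : ψ y ∈ W := hBW hyB
    obtain ⟨y', hy'U', hy'⟩ : ψ y ∈ ψ '' U' := hWsub ⟨hyW, hyC⟩
    have hCy : C y' = C y := hconst y' y hy'
    -- Apply (S1) at `y'` inside `U'`.
    obtain ⟨U'', hU''o, hy'U'', hU''U', hU''C, hU''nhds⟩ :=
      hC.locally y' U' (hU'o.mem_nhds hy'U')
    obtain ⟨W'', hW''o, hy'W'', hW''sub⟩ := mem_nhdsWithin.mp hU''nhds
    -- Apply (S1) at `y` (trivial neighborhood).
    obtain ⟨Uy, hUyo, hyUy, -, hUyC, -⟩ := hC.locally y Set.univ Filter.univ_mem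
    refine ⟨Uy ∩ ψ ⁻¹' W'', hUyo.inter (hW''o.preimage hcont), ⟨hyUy, show ψ y ∈ W'' from hy' ▸ hy'W''⟩, ?_⟩
    rintro v ⟨z, ⟨hzUy, hzW''⟩, rfl⟩
    have hzC : ψ z ∈ C y' := hCy ▸ hUyC ⟨z, hzUy, rfl⟩
    have : ψ z ∈ ψ '' U'' := hW''sub ⟨hzW'', hzC⟩
    exact hU'C (Set.image_mono (f := ψ) hU''U' this)
  have main : ∀ y ∈ ψ ⁻¹' B, ψ y ∈ C x := by
    by_contra hcon
    push_neg at hcon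
    obtain ⟨y₀, hy₀B, hy₀C⟩ := hcon
    set O₁ : Set M := {z | ∃ N : Set M, IsOpen N ∧ z ∈ N ∧ ψ '' N ⊆ C x} with hO₁
    have hO₁o : IsOpen O₁ := by
      rw [isOpen_iff_mem_nhds]
      rintro z ⟨N, hNo, hzN, hNsub⟩
      exact Filter.mem_of_superset (hNo.mem_nhds hzN) fun w hw => ⟨N, hNo, hw, hNsub⟩
    have hO₂o : IsOpen (ψ ⁻¹' (C x))ᶜ := (hC.isClosed x).preimage hcont |>.isOpen_compl
    have hxB : ψ x ∈ B := mem_of_mem_nhds hB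
    have hxmem : ∀ z : M, ψ z ∈ C z := by
      intro z
      obtain ⟨Uz, _, hzUz, -, hUzC, -⟩ := hC.locally z Set.univ Filter.univ_mem
      exact hUzC ⟨z, hzUz, rfl⟩
    have hcover : ψ ⁻¹' B ⊆ O₁ ∪ (ψ ⁻¹' (C x))ᶜ := by
      intro z hz
      by_cases h : ψ z ∈ C x
      · exact Or.inl (key z hz h)
      · exact Or.inr h
    obtain ⟨w, hwB, hwO₁, hwO₂⟩ := hBpc O₁ (ψ ⁻¹' (C x))ᶜ hO₁o hO₂o hcover
      ⟨x, hxB, key x hxB (hxmem x)⟩ ⟨y₀, hy₀B, hy₀C⟩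
    obtain ⟨N, _, hwN, hNsub⟩ := hwO₁
    exact hwO₂ (hNsub ⟨w, hwN, rfl⟩)
  -- Conclude: `B ∩ range ψ ⊆ ψ '' U`.
  have hBU : ∀ v ∈ B, v ∈ Set.range ψ → v ∈ ψ '' U := by
    rintro v hvB ⟨z, rfl⟩
    exact Set.image_mono (f := ψ) hU'U (hWsub ⟨hBW hvB, main z hvB⟩)
  -- Translate to the subtype.
  have himg : Set.rangeFactorization ψ '' U = Subtype.val ⁻¹' (ψ '' U) := by
    ext z
    constructor
    · rintro ⟨a, haU, rfl⟩
      exact ⟨a, haU, rfl⟩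
    · rintro ⟨a, haU, ha⟩
      exact ⟨a, haU, Subtype.ext ha⟩
  rw [himg, nhds_subtype_eq_comap]
  exact Filter.mem_comap.mpr ⟨B, hB, fun z hz => hBU z.1 hz z.2⟩
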